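/- Let q1, q2, q3 ∈ ℝ³ be the vertices of a nondegenerate triangle σ and let X be an affine map ℝ³ → ℝ³ mapping σ onto a triangle σ' with vertices X(q1), X(q2), X(q3). Then (1/2)|σ| |∇_σ X|²_F ≥ |σ'|, with equality when X is the identity, where |σ| and |σ'| denote the triangle areas and ∇_σ X is the surface gradient of X over the plane of σ. -/

import Mathlib

open Matrix

/-- Euclidean norm of a vector in `Fin 3 → ℝ`. -/
noncomputable def norm3 (v : Fin 3 → ℝ) : ℝ := Real.sqrt (v ⬝ᵥ v)

/-- Area of the triangle with vertices `q1 q2 q3` in ℝ³. -/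
noncomputable def triArea (q1 q2 q3 : Fin 3 → ℝ) : ℝ :=
  (1 / 2) * norm3 (crossProduct (q2 - q1) (q3 - q1))

/-- Squared Frobenius norm of a 3×3 real matrix. -/
noncomputable def frobSq (M : Matrix (Fin 3) (Fin 3) ℝ) : ℝ := (Mᵀ * M).trace

/-- Lagrange identity. -/
lemma my_lag (u v : Fin 3 → ℝ) :
    (u ⨯₃ v) ⬝ᵥ (u ⨯₃ v) = (u ⬝ᵥ u) * (v ⬝ᵥ v) - (u ⬝ᵥ v)^2 := by
  simp [cross_apply, dotProduct, Fin.sum_univ_three]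
  ring

/-- BAC-CAB. -/
lemma my_bac (e f : Fin 3 → ℝ) : (e ⨯₃ f) ⨯₃ e = (e ⬝ᵥ e) • f - (e ⬝ᵥ f) • e := by
  funext i
  fin_cases i <;> simp [cross_apply, dotProduct, Fin.sum_univ_three] <;> ring

lemma my_dot_cross (e f : Fin 3 → ℝ) : (e ⨯₃ f) ⬝ᵥ e = 0 := by
  simp [cross_apply, dotProduct, Fin.sum_univ_three]
  ring

/-- Completeness of the orthogonal frame e, (e×f)×e, e×f. -/
lemma my_trace_lemma (L : Matrix (Fin 3) (Fin 3) ℝ) (e f : Fin 3 → ℝ) :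
    (e ⬝ᵥ e) * ((e ⨯₃ f) ⬝ᵥ (e ⨯₃ f)) * (Lᵀ * L).trace =
      ((e ⨯₃ f) ⬝ᵥ (e ⨯₃ f)) * (L.mulVec e ⬝ᵥ L.mulVec e)
      + (L.mulVec ((e ⨯₃ f) ⨯₃ e) ⬝ᵥ L.mulVec ((e ⨯₃ f) ⨯₃ e))
      + (e ⬝ᵥ e) * (L.mulVec (e ⨯₃ f) ⬝ᵥ L.mulVec (e ⨯₃ f)) := by
  simp [cross_apply, dotProduct, mulVec, Matrix.trace, Matrix.mul_apply,
    Fin.sum_univ_three, Matrix.diag]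
  ring

lemma my_frob_lemma (L : Matrix (Fin 3) (Fin 3) ℝ) (w : Fin 3 → ℝ) (ht : w ⬝ᵥ w ≠ 0) :
    frobSq (L * (1 - (w ⬝ᵥ w)⁻¹ • vecMulVec w w)) =
      (Lᵀ * L).trace - (w ⬝ᵥ w)⁻¹ * (L.mulVec w ⬝ᵥ L.mulVec w) := by
  have h1 : L * (1 - (w ⬝ᵥ w)⁻¹ • vecMulVec w w)
      = L - (w ⬝ᵥ w)⁻¹ • (L * vecMulVec w w) := by
    rw [Matrix.mul_sub, Matrix.mul_one, Matrix.mul_smul]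
  rw [h1]
  simp only [frobSq, Matrix.trace, Matrix.diag, Matrix.mul_apply, Matrix.transpose_apply,
    Matrix.sub_apply, Matrix.smul_apply, vecMulVec_apply, dotProduct,
    mulVec, Fin.sum_univ_three, smul_eq_mul, Finset.sum_sub_distrib]
  simp only [dotProduct, Fin.sum_univ_three] at ht
  have ht2 : w 0 ^ 2 + w 1 ^ 2 + w 2 ^ 2 ≠ 0 := by rw [sq, sq, sq]; exact ht
  field_simp
  ring

theorem stmt_8 (q1 q2 q3 : Fin 3 → ℝ)
    (hnd : crossProduct (q2 - q1) (q3 - q1) ≠ 0)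
    (L : Matrix (Fin 3) (Fin 3) ℝ) (b : Fin 3 → ℝ)
    (X : (Fin 3 → ℝ) → (Fin 3 → ℝ)) (hX : ∀ q, X q = L.mulVec q + b)
    (n : Fin 3 → ℝ) (hn : n = (norm3 (crossProduct (q2 - q1) (q3 - q1)))⁻¹ •
      crossProduct (q2 - q1) (q3 - q1))
    (P : Matrix (Fin 3) (Fin 3) ℝ) (hP : P = 1 - vecMulVec n n) :
    (1 / 2) * triArea q1 q2 q3 * frobSq (L * P) ≥ triArea (X q1) (X q2) (X q3) ∧
    (L = 1 → (1 / 2) * triArea q1 q2 q3 * frobSq (L * P) = triArea (X q1) (X q2) (X q3)) := by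
  set e : Fin 3 → ℝ := q2 - q1 with he
  set f : Fin 3 → ℝ := q3 - q1 with hf
  set w : Fin 3 → ℝ := e ⨯₃ f with hw
  set t : ℝ := w ⬝ᵥ w with htdef
  set s : ℝ := norm3 w with hsdef
  -- positivity facts
  have htnn : (0:ℝ) ≤ t := Finset.sum_nonneg fun i _ => mul_self_nonneg _
  have ht0 : w ⬝ᵥ w ≠ 0 := by
    rw [← htdef]
    intro h
    exact hnd (dotProduct_self_eq_zero.mp (htdef ▸ h))
  have htpos : 0 < t := lt_of_le_of_ne htnn (Ne.symm ht0)
  have hs2 : s * s = t := Real.mul_self_sqrt htnn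
  have hspos : 0 < s := Real.sqrt_pos.mpr htpos
  have hs0 : s ≠ 0 := ne_of_gt hspos
  -- e ≠ 0
  have hc2pos : (0:ℝ) < e ⬝ᵥ e := by
    rcases eq_or_ne e 0 with h | h
    · exfalso; apply hnd; rw [hw, h]; simp
    · have h2 : e ⬝ᵥ e ≠ 0 := fun hc => h (dotProduct_self_eq_zero.mp hc)
      exact lt_of_le_of_ne (Finset.sum_nonneg fun i _ => mul_self_nonneg _) (Ne.symm h2)
  set c2 : ℝ := e ⬝ᵥ e with hc2def
  set u : Fin 3 → ℝ := w ⨯₃ e with hu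
  set a : ℝ := L.mulVec e ⬝ᵥ L.mulVec e with ha
  set bb : ℝ := L.mulVec u ⬝ᵥ L.mulVec u with hbb
  set d : ℝ := L.mulVec w ⬝ᵥ L.mulVec w with hd
  have hann : (0:ℝ) ≤ a := Finset.sum_nonneg fun i _ => mul_self_nonneg _
  have hbnn : (0:ℝ) ≤ bb := Finset.sum_nonneg fun i _ => mul_self_nonneg _
  have hdnn : (0:ℝ) ≤ d := Finset.sum_nonneg fun i _ => mul_self_nonneg _
  -- P without square roots
  have hPP : P = 1 - (w ⬝ᵥ w)⁻¹ • vecMulVec w w := by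
    rw [hP, hn]
    congr 1
    funext i j
    simp only [vecMulVec_apply, Pi.smul_apply, smul_eq_mul, Matrix.smul_apply]
    rw [show (w ⬝ᵥ w) = s * s from (hs2.trans htdef).symm]
    field_simp
  -- frobSq formula
  have hfrob : frobSq (L * P) = (t * a + bb) / (c2 * t) := by
    rw [hPP, my_frob_lemma L w ht0]
    have h2 := my_trace_lemma L e f
    rw [← hw, ← htdef, ← hc2def, ← hu, ← ha, ← hbb] at h2
    rw [← htdef, ← hd]
    have hct : c2 * t ≠ 0 := by positivity
    field_simp
    linear_combination h2
  -- the image triangle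
  set g : Fin 3 → ℝ := (L.mulVec e) ⨯₃ (L.mulVec f) with hg
  have hggnn : (0:ℝ) ≤ g ⬝ᵥ g := Finset.sum_nonneg fun i _ => mul_self_nonneg _
  have harea' : triArea (X q1) (X q2) (X q3) = (1/2) * Real.sqrt (g ⬝ᵥ g) := by
    have h1 : X q2 - X q1 = L.mulVec e := by
      rw [hX, hX, he, mulVec_sub]; abel
    have h2 : X q3 - X q1 = L.mulVec f := by
      rw [hX, hX, hf, mulVec_sub]; abel
    rw [triArea, h1, h2, norm3, ← hg]
  -- relation c2 • g = (Le) ⨯₃ (Lu)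
  have hLu : L.mulVec u = c2 • L.mulVec f - (e ⬝ᵥ f) • L.mulVec e := by
    have h3 : u = c2 • f - (e ⬝ᵥ f) • e := by
      rw [hu, hw, my_bac, hc2def]
    rw [h3, mulVec_sub, mulVec_smul, mulVec_smul]
  have hcg : (L.mulVec e) ⨯₃ (L.mulVec u) = c2 • g :=
    calc (L.mulVec e) ⨯₃ (L.mulVec u)
        = (L.mulVec e) ⨯₃ (c2 • L.mulVec f - (e ⬝ᵥ f) • L.mulVec e) := by rw [hLu]
      _ = c2 • g := by
          rw [map_sub, _root_.map_smul, _root_.map_smul, cross_self, smul_zero, sub_zero, hg]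
  -- Lagrange bound
  have hlag : ((L.mulVec e) ⨯₃ (L.mulVec u)) ⬝ᵥ ((L.mulVec e) ⨯₃ (L.mulVec u)) ≤ a * bb := by
    rw [my_lag, ← ha, ← hbb]
    nlinarith [sq_nonneg (L.mulVec e ⬝ᵥ L.mulVec u)]
  have hgg : c2 ^ 2 * (g ⬝ᵥ g) ≤ a * bb := by
    have h4 : ((c2 • g) ⬝ᵥ (c2 • g)) = c2 ^ 2 * (g ⬝ᵥ g) := by
      rw [smul_dotProduct, dotProduct_smul, smul_eq_mul, smul_eq_mul]; ring
    rw [← h4, ← hcg]; exact hlag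
  set A : ℝ := Real.sqrt a with hA
  set B : ℝ := Real.sqrt bb with hB
  have hA2 : A * A = a := Real.mul_self_sqrt hann
  have hB2 : B * B = bb := Real.mul_self_sqrt hbnn
  have hAnn : 0 ≤ A := Real.sqrt_nonneg _
  have hBnn : 0 ≤ B := Real.sqrt_nonneg _
  -- sqrt bound : c2 * sqrt(g⬝g) ≤ A * B
  have hsqrtg : c2 * Real.sqrt (g ⬝ᵥ g) ≤ A * B := by
    have h5 : c2 * Real.sqrt (g ⬝ᵥ g) = Real.sqrt (c2 ^ 2 * (g ⬝ᵥ g)) := by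
      rw [Real.sqrt_mul (sq_nonneg _), Real.sqrt_sq hc2pos.le]
    have h6 : A * B = Real.sqrt (a * bb) := by
      rw [hA, hB, ← Real.sqrt_mul hann]
    rw [h5, h6]
    exact Real.sqrt_le_sqrt hgg
  -- areas in terms of s
  have hArea : triArea q1 q2 q3 = (1/2) * s := by
    rw [triArea]
  -- key AM-GM
  have hkey : 2 * t * (A * B) ≤ s * (t * a + bb) := by
    rw [← hs2, ← hA2, ← hB2]
    nlinarith [mul_nonneg hspos.le (sq_nonneg (s * A - B))]
  constructor
  · rw [ge_iff_le, harea', hArea, hfrob]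
    have hgs : Real.sqrt (g ⬝ᵥ g) ≤ A * B / c2 := by
      rw [le_div_iff₀ hc2pos]
      linarith [hsqrtg]
    have hdiff : 1/2 * ((1/2) * s) * ((t * a + bb) / (c2 * t)) - 1/2 * (A * B / c2)
        = (s * (t * a + bb) - 2 * t * (A * B)) / (4 * (c2 * t)) := by
      field_simp
      ring
    have hpos : 0 ≤ (s * (t * a + bb) - 2 * t * (A * B)) / (4 * (c2 * t)) :=
      div_nonneg (by linarith [hkey]) (by positivity)
    calc (1:ℝ)/2 * Real.sqrt (g ⬝ᵥ g) ≤ 1/2 * (A * B / c2) := by linarith [hgs]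
      _ ≤ 1/2 * ((1/2) * s) * ((t * a + bb) / (c2 * t)) := by linarith [hdiff ▸ hpos, hpos]
  · intro hL
    rw [harea', hArea, hfrob]
    have ha1 : a = c2 := by rw [ha, hL, Matrix.one_mulVec, hc2def]
    have hb1 : bb = t * c2 := by
      rw [hbb, hL, Matrix.one_mulVec, hu, hw, my_lag, my_dot_cross]
      rw [htdef, hc2def, hw]
      ring
    have hg1 : Real.sqrt (g ⬝ᵥ g) = s := by
      have : g = w := by rw [hg, hL, Matrix.one_mulVec, Matrix.one_mulVec, hw]
      rw [this, hsdef]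
      rfl
    rw [hg1, ha1, hb1]
    have h7 : (t * c2 + t * c2) / (c2 * t) = 2 := by
      field_simp
      ring
    rw [h7]
    ring
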